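/- Counting lemma: Let Ω₁, Ω₂ be finite nonempty sets and let T ⊆ Ω₁ × Ω₂ be (τ, γ)-combinatorially spread for some τ, γ > 0. Let k, ℓ be positive integers, let E ⊆ [k] × [ℓ] be a set of edges of a bipartite graph on vertex sets [k] and [ℓ], and let (i*, j*) ∈ E. For each (i, j) ∈ E \ {(i*, j*)} let f_{ij} : Ω₁ × Ω₂ → [0, 1]. Then E_{x₁,…,x_k ∈ Ω₁, y₁,…,y_ℓ ∈ Ω₂}[1_T(x_{i*}, y_{j*}) · ∏_{(i,j) ∈ E \ {(i*,j*)}} f_{ij}(x_i, y_j)] ≤ τ · E_{x₁,…,x_k ∈ Ω₁, y₁,…,y_ℓ ∈ Ω₂}[∏_{(i,j) ∈ E \ {(i*,j*)}} f_{ij}(x_i, y_j)] + γ. -/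

import Mathlib

/-- A subset `T ⊆ Ω₁ × Ω₂` is `(τ, γ)`-combinatorially spread if its density on every
rectangle is at most `τ` times the density of the rectangle, up to error `γ`
(Definition 3.1 of the paper). -/
def CombinatoriallySpread {Ω₁ Ω₂ : Type*} [Fintype Ω₁] [Fintype Ω₂]
    (T : Set (Ω₁ × Ω₂)) (τ γ : ℝ) : Prop :=
  ∀ (f : Ω₁ → ℝ) (g : Ω₂ → ℝ),
    (∀ x, f x ∈ Set.Icc (0 : ℝ) 1) → (∀ y, g y ∈ Set.Icc (0 : ℝ) 1) →
    (∑ x : Ω₁, ∑ y : Ω₂, f x * g y * T.indicator (fun _ => (1 : ℝ)) (x, y)) /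
        ((Fintype.card Ω₁ : ℝ) * (Fintype.card Ω₂ : ℝ)) ≤
      τ * ((∑ x : Ω₁, f x) / (Fintype.card Ω₁ : ℝ)) *
          ((∑ y : Ω₂, g y) / (Fintype.card Ω₂ : ℝ)) + γ

/-- Counting lemma (Lemma 3.2 of the paper): counts of bipartite graphs where one
edge is replaced by a combinatorially spread set. -/
theorem counting_lemma
    (Ω₁ Ω₂ : Type*) [Fintype Ω₁] [Fintype Ω₂] [Nonempty Ω₁] [Nonempty Ω₂]
    (τ γ : ℝ) (hτ : 0 < τ) (hγ : 0 < γ)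
    (T : Set (Ω₁ × Ω₂)) (hT : CombinatoriallySpread T τ γ)
    (k l : ℕ) (E : Finset (Fin k × Fin l)) (istar : Fin k) (jstar : Fin l)
    (hmem : (istar, jstar) ∈ E)
    (f : Fin k → Fin l → Ω₁ → Ω₂ → ℝ)
    (hf : ∀ p ∈ E.erase (istar, jstar), ∀ x y, f p.1 p.2 x y ∈ Set.Icc (0 : ℝ) 1) :
    (∑ x : Fin k → Ω₁, ∑ y : Fin l → Ω₂,
        T.indicator (fun _ => (1 : ℝ)) (x istar, y jstar) *
          ∏ p ∈ E.erase (istar, jstar), f p.1 p.2 (x p.1) (y p.2)) /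
        ((Fintype.card Ω₁ : ℝ) ^ k * (Fintype.card Ω₂ : ℝ) ^ l) ≤
      τ * ((∑ x : Fin k → Ω₁, ∑ y : Fin l → Ω₂,
          ∏ p ∈ E.erase (istar, jstar), f p.1 p.2 (x p.1) (y p.2)) /
        ((Fintype.card Ω₁ : ℝ) ^ k * (Fintype.card Ω₂ : ℝ) ^ l)) + γ := by
  classical
  set S : Finset (Fin k × Fin l) := E.erase (istar, jstar) with hSdef
  set c1 : ℝ := (Fintype.card Ω₁ : ℝ) with hc1def
  set c2 : ℝ := (Fintype.card Ω₂ : ℝ) with hc2def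
  have hc1 : 0 < c1 := by
    simp only [hc1def]; exact_mod_cast Fintype.card_pos
  have hc2 : 0 < c2 := by
    simp only [hc2def]; exact_mod_cast Fintype.card_pos
  set Ω₁' := ({j : Fin k // j ≠ istar} → Ω₁) with hO1def
  set Ω₂' := ({j : Fin l // j ≠ jstar} → Ω₂) with hO2def
  set e₁ := Equiv.funSplitAt istar Ω₁ with he1def
  set e₂ := Equiv.funSplitAt jstar Ω₂ with he2def
  set a0 : Ω₁ := Classical.arbitrary Ω₁ with ha0def
  set b0 : Ω₂ := Classical.arbitrary Ω₂ with hb0def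
  set n1 : ℝ := (Fintype.card Ω₁' : ℝ) with hn1def
  set n2 : ℝ := (Fintype.card Ω₂' : ℝ) with hn2def
  have hn1pos : 0 < n1 := by simp only [hn1def]; exact_mod_cast Fintype.card_pos
  have hn2pos : 0 < n2 := by simp only [hn2def]; exact_mod_cast Fintype.card_pos
  -- the two factor functions
  set F1 : Ω₁' → Ω₂' → Ω₁ → ℝ := fun x' y' a =>
    ∏ p ∈ S.filter (fun p => ¬ p.2 = jstar),
      f p.1 p.2 (e₁.symm (a, x') p.1) (e₂.symm (b0, y') p.2) with hF1def
  set F2 : Ω₁' → Ω₂' → Ω₂ → ℝ := fun x' y' b =>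
    ∏ p ∈ S.filter (fun p => p.2 = jstar),
      f p.1 p.2 (e₁.symm (a0, x') p.1) (e₂.symm (b, y') p.2) with hF2def
  -- the splitting of the product
  have hsplit : ∀ (x' : Ω₁') (y' : Ω₂') (a : Ω₁) (b : Ω₂),
      (∏ p ∈ S, f p.1 p.2 (e₁.symm (a, x') p.1) (e₂.symm (b, y') p.2)) =
        F2 x' y' b * F1 x' y' a := by
    intro x' y' a b
    rw [← Finset.prod_filter_mul_prod_filter_not S (fun p => p.2 = jstar)]
    congr 1
    · apply Finset.prod_congr rfl
      intro p hp
      rw [Finset.mem_filter] at hp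
      have hp2 : p.2 = jstar := hp.2
      have hp1 : p.1 ≠ istar := by
        intro h
        have : p = (istar, jstar) := Prod.ext h hp2
        exact (Finset.ne_of_mem_erase hp.1) this
      simp [he1def, hp1]
    · apply Finset.prod_congr rfl
      intro p hp
      rw [Finset.mem_filter] at hp
      have hp2 : p.2 ≠ jstar := hp.2
      simp [he2def, hp2]
  -- bounds on the factors
  have hF1mem : ∀ (x' : Ω₁') (y' : Ω₂') (a : Ω₁), F1 x' y' a ∈ Set.Icc (0:ℝ) 1 := by
    intro x' y' a
    constructor
    · apply Finset.prod_nonneg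
      intro p hp
      exact (hf p (Finset.mem_of_mem_filter p hp) _ _).1
    · apply Finset.prod_le_one
      · intro p hp; exact (hf p (Finset.mem_of_mem_filter p hp) _ _).1
      · intro p hp; exact (hf p (Finset.mem_of_mem_filter p hp) _ _).2
  have hF2mem : ∀ (x' : Ω₁') (y' : Ω₂') (b : Ω₂), F2 x' y' b ∈ Set.Icc (0:ℝ) 1 := by
    intro x' y' b
    constructor
    · apply Finset.prod_nonneg
      intro p hp
      exact (hf p (Finset.mem_of_mem_filter p hp) _ _).1
    · apply Finset.prod_le_one
      · intro p hp; exact (hf p (Finset.mem_of_mem_filter p hp) _ _).1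
      · intro p hp; exact (hf p (Finset.mem_of_mem_filter p hp) _ _).2
  -- rewrite the big sums
  have hsum1 : ∀ (G : (Fin k → Ω₁) → ℝ),
      (∑ x : Fin k → Ω₁, G x) = ∑ x' : Ω₁', ∑ a : Ω₁, G (e₁.symm (a, x')) := by
    intro G
    rw [← Equiv.sum_comp e₁.symm G, Fintype.sum_prod_type]
    exact Finset.sum_comm
  have hsum2 : ∀ (G : (Fin l → Ω₂) → ℝ),
      (∑ y : Fin l → Ω₂, G y) = ∑ y' : Ω₂', ∑ b : Ω₂, G (e₂.symm (b, y')) := by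
    intro G
    rw [← Equiv.sum_comp e₂.symm G, Fintype.sum_prod_type]
    exact Finset.sum_comm
  have hL : (∑ x : Fin k → Ω₁, ∑ y : Fin l → Ω₂,
        T.indicator (fun _ => (1 : ℝ)) (x istar, y jstar) *
          ∏ p ∈ S, f p.1 p.2 (x p.1) (y p.2)) =
      ∑ x' : Ω₁', ∑ y' : Ω₂', ∑ a : Ω₁, ∑ b : Ω₂,
        F1 x' y' a * F2 x' y' b * T.indicator (fun _ => (1 : ℝ)) (a, b) := by
    rw [hsum1]
    apply Finset.sum_congr rfl
    intro x' _
    have key : ∀ a : Ω₁,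
        (∑ y : Fin l → Ω₂, T.indicator (fun _ => (1 : ℝ)) (e₁.symm (a, x') istar, y jstar) *
            ∏ p ∈ S, f p.1 p.2 (e₁.symm (a, x') p.1) (y p.2)) =
        ∑ y' : Ω₂', ∑ b : Ω₂,
          F1 x' y' a * F2 x' y' b * T.indicator (fun _ => (1 : ℝ)) (a, b) := by
      intro a
      rw [hsum2]
      apply Finset.sum_congr rfl
      intro y' _
      apply Finset.sum_congr rfl
      intro b _
      rw [hsplit x' y' a b]
      have h1 : e₁.symm (a, x') istar = a := by simp [he1def]
      have h2 : e₂.symm (b, y') jstar = b := by simp [he2def]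
      rw [h1, h2]
      ring
    rw [Finset.sum_congr rfl (fun a _ => key a)]
    exact Finset.sum_comm
  have hR : (∑ x : Fin k → Ω₁, ∑ y : Fin l → Ω₂,
        ∏ p ∈ S, f p.1 p.2 (x p.1) (y p.2)) =
      ∑ x' : Ω₁', ∑ y' : Ω₂',
        (∑ a : Ω₁, F1 x' y' a) * (∑ b : Ω₂, F2 x' y' b) := by
    rw [hsum1]
    apply Finset.sum_congr rfl
    intro x' _
    have key : ∀ a : Ω₁,
        (∑ y : Fin l → Ω₂, ∏ p ∈ S, f p.1 p.2 (e₁.symm (a, x') p.1) (y p.2)) =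
        ∑ y' : Ω₂', ∑ b : Ω₂, F1 x' y' a * F2 x' y' b := by
      intro a
      rw [hsum2]
      apply Finset.sum_congr rfl
      intro y' _
      apply Finset.sum_congr rfl
      intro b _
      rw [hsplit x' y' a b]
      ring
    rw [Finset.sum_congr rfl (fun a _ => key a)]
    rw [Finset.sum_comm]
    apply Finset.sum_congr rfl
    intro y' _
    rw [Finset.sum_mul_sum]
  -- inner inequality from spreadness
  have hinner : ∀ (x' : Ω₁') (y' : Ω₂'),
      (∑ a : Ω₁, ∑ b : Ω₂,
        F1 x' y' a * F2 x' y' b * T.indicator (fun _ => (1 : ℝ)) (a, b)) ≤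
      τ * ((∑ a : Ω₁, F1 x' y' a) * (∑ b : Ω₂, F2 x' y' b)) + γ * (c1 * c2) := by
    intro x' y'
    have h := hT (F1 x' y') (F2 x' y') (hF1mem x' y') (hF2mem x' y')
    rw [div_le_iff₀ (by positivity : (0:ℝ) < c1 * c2)] at h
    calc (∑ a : Ω₁, ∑ b : Ω₂,
          F1 x' y' a * F2 x' y' b * T.indicator (fun _ => (1 : ℝ)) (a, b))
        ≤ (τ * ((∑ a : Ω₁, F1 x' y' a) / c1) * ((∑ b : Ω₂, F2 x' y' b) / c2) + γ) *
            (c1 * c2) := h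
      _ = τ * ((∑ a : Ω₁, F1 x' y' a) * (∑ b : Ω₂, F2 x' y' b)) + γ * (c1 * c2) := by
          field_simp
  -- cardinality identity
  have hcard : c1 ^ k * c2 ^ l = (c1 * c2) * (n1 * n2) := by
    have h1 : (Fintype.card (Fin k → Ω₁) : ℝ) = c1 ^ k := by
      simp [hc1def, Fintype.card_fun]
    have h2 : (Fintype.card (Fin k → Ω₁) : ℝ) = c1 * n1 := by
      rw [Fintype.card_congr e₁]
      simp [hc1def, hn1def, hO1def]
    have h3 : (Fintype.card (Fin l → Ω₂) : ℝ) = c2 ^ l := by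
      simp [hc2def, Fintype.card_fun]
    have h4 : (Fintype.card (Fin l → Ω₂) : ℝ) = c2 * n2 := by
      rw [Fintype.card_congr e₂]
      simp [hc2def, hn2def, hO2def]
    rw [← h1, ← h3, h2, h4]; ring
  -- combine
  have hmain : (∑ x : Fin k → Ω₁, ∑ y : Fin l → Ω₂,
        T.indicator (fun _ => (1 : ℝ)) (x istar, y jstar) *
          ∏ p ∈ S, f p.1 p.2 (x p.1) (y p.2)) ≤
      τ * (∑ x : Fin k → Ω₁, ∑ y : Fin l → Ω₂,
          ∏ p ∈ S, f p.1 p.2 (x p.1) (y p.2)) + γ * (c1 ^ k * c2 ^ l) := by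
    rw [hL, hR, hcard]
    calc (∑ x' : Ω₁', ∑ y' : Ω₂', ∑ a : Ω₁, ∑ b : Ω₂,
          F1 x' y' a * F2 x' y' b * T.indicator (fun _ => (1 : ℝ)) (a, b))
        ≤ ∑ x' : Ω₁', ∑ y' : Ω₂',
            (τ * ((∑ a : Ω₁, F1 x' y' a) * (∑ b : Ω₂, F2 x' y' b)) + γ * (c1 * c2)) := by
          apply Finset.sum_le_sum
          intro x' _
          apply Finset.sum_le_sum
          intro y' _
          exact hinner x' y'
      _ = τ * (∑ x' : Ω₁', ∑ y' : Ω₂',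
            (∑ a : Ω₁, F1 x' y' a) * (∑ b : Ω₂, F2 x' y' b)) + γ * ((c1 * c2) * (n1 * n2)) := by
          simp only [Finset.sum_add_distrib, Finset.sum_const, Finset.card_univ,
            Finset.mul_sum, nsmul_eq_mul]
          rw [hn1def, hn2def]
          ring
  have hD : (0:ℝ) < c1 ^ k * c2 ^ l := by positivity
  rw [div_le_iff₀ hD]
  calc (∑ x : Fin k → Ω₁, ∑ y : Fin l → Ω₂,
        T.indicator (fun _ => (1 : ℝ)) (x istar, y jstar) *
          ∏ p ∈ S, f p.1 p.2 (x p.1) (y p.2))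
      ≤ τ * (∑ x : Fin k → Ω₁, ∑ y : Fin l → Ω₂,
          ∏ p ∈ S, f p.1 p.2 (x p.1) (y p.2)) + γ * (c1 ^ k * c2 ^ l) := hmain
    _ = (τ * ((∑ x : Fin k → Ω₁, ∑ y : Fin l → Ω₂,
          ∏ p ∈ S, f p.1 p.2 (x p.1) (y p.2)) / (c1 ^ k * c2 ^ l)) + γ) *
          (c1 ^ k * c2 ^ l) := by
        field_simp
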